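/- Every word w over a totally ordered alphabet has a unique factorization w = w^{(1)} w^{(2)} ··· w^{(d)} as a concatenation of Lyndon words with w^{(1)} ≥_lex w^{(2)} ≥_lex ··· ≥_lex w^{(d)}. -/

import Mathlib

open scoped Classical
noncomputable section

/-- The ground set `[n] = {1, …, n}`. -/
def ground (n : ℕ) : Finset ℕ := Finset.Icc 1 n

/-- `A` is a set partition of `[n]`. -/
def IsSetPartition (n : ℕ) (A : Finset (Finset ℕ)) : Prop :=
  (∀ B ∈ A, B.Nonempty) ∧
  (∀ B ∈ A, ∀ C ∈ A, B ≠ C → Disjoint B C) ∧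
  A.sup id = ground n

/-- Shift every entry of every part by `n`. -/
def shiftP (n : ℕ) (A : Finset (Finset ℕ)) : Finset (Finset ℕ) :=
  A.image (fun B => B.image (· + n))

/-- Shifted concatenation `A|B` of a set partition `A ⊢ [n]` with `B`. -/
def concatP (n : ℕ) (A B : Finset (Finset ℕ)) : Finset (Finset ℕ) :=
  A ∪ shiftP n B

/-- `A` is an atomic set partition of `[n]`: nonempty and not a nontrivial
shifted concatenation. -/
def AtomicP (n : ℕ) (A : Finset (Finset ℕ)) : Prop :=
  IsSetPartition n A ∧ 0 < n ∧
  ¬ ∃ k B C, 0 < k ∧ k < n ∧ IsSetPartition k B ∧ IsSetPartition (n - k) C ∧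
      A = concatP k B C

/-- Shifted concatenation of a list of (size, set partition) pairs. -/
def concatListP : List (ℕ × Finset (Finset ℕ)) → ℕ × Finset (Finset ℕ)
  | [] => (0, ∅)
  | p :: L => ((concatListP L).1 + p.1, concatP p.1 p.2 (concatListP L).2)

/-- `L` is the atomic factorization `A^!` of the set partition `A ⊢ [n]`. -/
def AtomicFactorization (n : ℕ) (A : Finset (Finset ℕ))
    (L : List (ℕ × Finset (Finset ℕ))) : Prop :=
  (∀ p ∈ L, AtomicP p.1 p.2) ∧ concatListP L = (n, A)

/-- The Bell number: the number of set partitions of `[n]`. -/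
def bell (n : ℕ) : ℕ := Nat.card {A : Finset (Finset ℕ) // IsSetPartition n A}

/-- Stirling numbers of the second kind: set partitions of `[n]` into `k` parts. -/
def stirling2 (n k : ℕ) : ℕ :=
  Nat.card {A : Finset (Finset ℕ) // IsSetPartition n A ∧ A.card = k}

/-- The number of atomic set partitions of `[n]` into `k` parts. -/
def atomCount (n k : ℕ) : ℕ :=
  Nat.card {A : Finset (Finset ℕ) // AtomicP n A ∧ A.card = k}

/-- The number of atomic set partitions of `[n]`. -/
def atomCount' (n : ℕ) : ℕ := Nat.card {A : Finset (Finset ℕ) // AtomicP n A}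

/-- Refinement order: `A ≤ B` iff every part of `A` is contained in a part of `B`. -/
def refines (A B : Finset (Finset ℕ)) : Prop := ∀ a ∈ A, ∃ b ∈ B, a ⊆ b

/-- The meet `A ∧ B` of two set partitions. -/
def meetP (A B : Finset (Finset ℕ)) : Finset (Finset ℕ) :=
  ((A ×ˢ B).image fun p => p.1 ∩ p.2).filter (·.Nonempty)

/-- The set partition `{[n]}` with a single part (empty if `n = 0`). -/
def onePartP (n : ℕ) : Finset (Finset ℕ) := if n = 0 then ∅ else {ground n}

/-- The finite set of set partitions of `[n]` satisfying a predicate `P`. -/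
def SPs (n : ℕ) (P : Finset (Finset ℕ) → Prop) : Finset (Finset (Finset ℕ)) :=
  (ground n).powerset.powerset.filter fun A => IsSetPartition n A ∧ P A

/-- Covering relation for `≤_*`: `B` covers `A` if `B` is obtained from `A` by merging two
parts `a, a'` with every element of `a` smaller than every element of `a'`. -/
def coverStar (A B : Finset (Finset ℕ)) : Prop :=
  ∃ a ∈ A, ∃ a' ∈ A, a ≠ a' ∧ (∀ x ∈ a, ∀ y ∈ a', x < y) ∧
    B = insert (a ∪ a') ((A.erase a).erase a')

/-- The order `≤_*` on set partitions. -/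
def leStar : Finset (Finset ℕ) → Finset (Finset ℕ) → Prop :=
  Relation.ReflTransGen coverStar

/-- Restriction `A↓_S` of a set partition to the entries in `S`. -/
def restrictP (A : Finset (Finset ℕ)) (S : Finset ℕ) : Finset (Finset ℕ) :=
  (A.image (· ∩ S)).filter (·.Nonempty)

/-- The standardization map of a finite set `S`: sends the `i`-th smallest element of `S`
to `i` (1-indexed). -/
def stMap (S : Finset ℕ) (x : ℕ) : ℕ := (S.filter (· ≤ x)).card

/-- Standardization of a set partition: relabel its entries to `{1,…,m}` preserving order. -/
def stdP (A : Finset (Finset ℕ)) : Finset (Finset ℕ) :=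
  A.image fun b => b.image (stMap (A.sup id))

/-- The map raising `{1,…,|S|}` order-preservingly onto `S`. -/
def raiseMap (S : Finset ℕ) (x : ℕ) : ℕ := (S.sort (· ≤ ·)).getD (x - 1) 0

/-- `A↑_S`: raise the entries of `A` order-preservingly so the ground set becomes `S`. -/
def raiseP (S : Finset ℕ) (A : Finset (Finset ℕ)) : Finset (Finset ℕ) :=
  A.image fun b => b.image (raiseMap S)

/-- `IsShuffle l₁ l₂ l`: `l` is a shuffle (interleaving) of `l₁` and `l₂`. -/
inductive IsShuffle {α : Type*} : List α → List α → List α → Prop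
  | nil : IsShuffle [] [] []
  | left {a : α} {l₁ l₂ l : List α} : IsShuffle l₁ l₂ l → IsShuffle (a :: l₁) l₂ (a :: l)
  | right {a : α} {l₁ l₂ l : List α} : IsShuffle l₁ l₂ l → IsShuffle l₁ (a :: l₂) (a :: l)

/-- A word is Lyndon if it is nonempty and lexicographically strictly smaller than all of
its proper cyclic rotations. -/
def LyndonWord {α : Type*} (lt : α → α → Prop) (w : List α) : Prop :=
  w ≠ [] ∧ ∀ i, 0 < i → i < w.length → List.Lex lt w (w.rotate i)

/-- A set partition is Lyndon (with respect to a total order `lt` on atomic set partitions)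
if its atomic factorization is a Lyndon word. -/
def LyndonPartition (lt : ℕ × Finset (Finset ℕ) → ℕ × Finset (Finset ℕ) → Prop)
    (n : ℕ) (A : Finset (Finset ℕ)) : Prop :=
  ∃ L, AtomicFactorization n A L ∧ LyndonWord lt L

/-! ### Set compositions -/

/-- `Φ` is a set composition of `[n]`: an ordered sequence of nonempty pairwise disjoint
sets whose union is `[n]`. -/
def IsSetComposition (n : ℕ) (Φ : List (Finset ℕ)) : Prop :=
  (∀ B ∈ Φ, B.Nonempty) ∧ Φ.Pairwise Disjoint ∧ Φ.foldr (· ∪ ·) ∅ = ground n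

/-- Shift every entry of every part of a set composition by `n`. -/
def shiftC (n : ℕ) (Φ : List (Finset ℕ)) : List (Finset ℕ) :=
  Φ.map (·.image (· + n))

/-- Shifted concatenation `Φ|Ψ` of set compositions, `Φ ⊨ [n]`. -/
def concatC (n : ℕ) (Φ Ψ : List (Finset ℕ)) : List (Finset ℕ) := Φ ++ shiftC n Ψ

/-- An atomic set composition: nonempty and not a nontrivial shifted concatenation. -/
def AtomicC (n : ℕ) (Φ : List (Finset ℕ)) : Prop :=
  IsSetComposition n Φ ∧ 0 < n ∧
  ¬ ∃ k Ψ Γ, 0 < k ∧ k < n ∧ IsSetComposition k Ψ ∧ IsSetComposition (n - k) Γ ∧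
      Φ = concatC k Ψ Γ

/-- Shifted concatenation of a list of (size, set composition) pairs. -/
def concatListC : List (ℕ × List (Finset ℕ)) → ℕ × List (Finset ℕ)
  | [] => (0, [])
  | p :: L => ((concatListC L).1 + p.1, concatC p.1 p.2 (concatListC L).2)

/-- `L` is the atomic factorization `Φ^!` of the set composition `Φ ⊨ [n]`. -/
def AtomicFactorizationC (n : ℕ) (Φ : List (Finset ℕ))
    (L : List (ℕ × List (Finset ℕ))) : Prop :=
  (∀ p ∈ L, AtomicC p.1 p.2) ∧ concatListC L = (n, Φ)

/-- Covering relation for `≤_*` on set compositions: merge two adjacent parts `a, b` with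
every element of `a` smaller than every element of `b`. -/
def coverStarC (Φ Ψ : List (Finset ℕ)) : Prop :=
  ∃ L₁ a b L₂, Φ = L₁ ++ a :: b :: L₂ ∧ (∀ x ∈ a, ∀ y ∈ b, x < y) ∧
    Ψ = L₁ ++ (a ∪ b) :: L₂

/-- The order `≤_*` on set compositions. -/
def leStarC : List (Finset ℕ) → List (Finset ℕ) → Prop :=
  Relation.ReflTransGen coverStarC

/-- The meet operation `Φ ∧ Ψ` on set compositions: the nonempty intersections
`Φ_i ∩ Ψ_j` in lexicographic order of `(i, j)`. -/
def meetC (Φ Ψ : List (Finset ℕ)) : List (Finset ℕ) :=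
  (Φ.flatMap fun a => Ψ.map fun b => a ∩ b).filter (·.Nonempty)

/-- The one-part set composition `([n])` (empty if `n = 0`). -/
def onePartC (n : ℕ) : List (Finset ℕ) := if n = 0 then [] else [ground n]

/-- Lists of length `k` with all entries in `s`. -/
def listsOfLen (s : Finset (Finset ℕ)) : ℕ → Finset (List (Finset ℕ))
  | 0 => {[]}
  | k + 1 => (s ×ˢ listsOfLen s k).image fun p => p.1 :: p.2

/-- The finite set of set compositions of `[n]` satisfying a predicate `P`. -/
def SCs (n : ℕ) (P : List (Finset ℕ) → Prop) : Finset (List (Finset ℕ)) :=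
  ((Finset.range (n + 1)).biUnion fun k => listsOfLen (ground n).powerset k).filter
    fun Φ => IsSetComposition n Φ ∧ P Φ

/-- `Φ↑_S`: raise the entries of a set composition order-preservingly into `S`. -/
def raiseC (S : Finset ℕ) (Φ : List (Finset ℕ)) : List (Finset ℕ) :=
  Φ.map (·.image (raiseMap S))

/-- Standardization of a set composition. -/
def stdC (Φ : List (Finset ℕ)) : List (Finset ℕ) :=
  Φ.map (·.image (stMap (Φ.foldr (· ∪ ·) ∅)))

/-- `α(Φ)`: the composition of part sizes of `Φ`. -/
def alphaC (Φ : List (Finset ℕ)) : List ℕ := Φ.map Finset.card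

/-- The order `≤_#` on set compositions: `Φ ≤_# Ψ` iff `α(Φ) = α(Ψ)` and each atomic factor
of `Φ` is the standardization of the corresponding consecutive block of parts of `Ψ`. -/
def leSharp (Φ Ψ : List (Finset ℕ)) : Prop :=
  alphaC Φ = alphaC Ψ ∧
  ∃ (L : List (ℕ × List (Finset ℕ))) (Bs : List (List (Finset ℕ))),
    (∀ p ∈ L, AtomicC p.1 p.2) ∧ (concatListC L).2 = Φ ∧
    Ψ = Bs.flatten ∧ List.Forall₂ (fun b (l : ℕ × List (Finset ℕ)) => stdC b = l.2) Bs L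

/-! ### Index types -/

/-- Set partitions with their sizes. -/
abbrev SPIdx := {x : ℕ × Finset (Finset ℕ) // IsSetPartition x.1 x.2}

/-- Atomic set partitions with their sizes. -/
abbrev AtomIdx := {x : ℕ × Finset (Finset ℕ) // AtomicP x.1 x.2}

/-- Set compositions with their sizes. -/
abbrev SCIdx := {x : ℕ × List (Finset ℕ) // IsSetComposition x.1 x.2}

/-- Atomic set compositions with their sizes. -/
abbrev AtomCIdx := {x : ℕ × List (Finset ℕ) // AtomicC x.1 x.2}

namespace LyndonAux

variable {α : Type*} [LinearOrder α]

-- `<` on lists is Lex (· < ·)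
lemma lt_def {u v : List α} : u < v ↔ List.Lex (· < ·) u v := Iff.rfl

lemma lt_append_right (u : List α) {t : List α} (ht : t ≠ []) : u < u ++ t := by
  induction u with
  | nil => cases t with
    | nil => exact absurd rfl ht
    | cons a l => exact List.Lex.nil
  | cons a l ih => exact List.Lex.cons ih

lemma le_of_prefix {u v : List α} (h : u <+: v) : u ≤ v := by
  obtain ⟨t, rfl⟩ := h
  rcases eq_or_ne t [] with rfl | ht
  · simp
  · exact (lt_append_right u ht).le

lemma lt_of_prefix_ne {u v : List α} (h : u <+: v) (hne : u ≠ v) : u < v := by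
  obtain ⟨t, rfl⟩ := h
  rcases eq_or_ne t [] with rfl | ht
  · simp at hne
  · exact lt_append_right u ht

/-- Key lemma: if u < v then u is a prefix of v or appending anything preserves `<`. -/
lemma prefix_or_append_lt {u v : List α} (h : u < v) :
    u <+: v ∨ ∀ x y : List α, u ++ x < v ++ y := by
  rw [lt_def] at h
  induction h with
  | nil => exact Or.inl (List.nil_prefix)
  | @rel a b l₁ l₂ hab => exact Or.inr fun x y => List.Lex.rel hab
  | @cons a l₁ l₂ h ih =>
    rcases ih with hp | hap
    · exact Or.inl (List.cons_prefix_cons.mpr ⟨rfl, hp⟩)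
    · exact Or.inr fun x y => List.Lex.cons (hap x y)

lemma append_lt_cancel {c u v : List α} (h : c ++ u < c ++ v) : u < v := by
  induction c with
  | nil => exact h
  | cons a l ih =>
    rw [lt_def] at h
    cases h with
    | rel hr => exact absurd hr (lt_irrefl a)
    | cons h => exact ih h

/-- Lyndon via suffixes: `w` is smaller than each of its proper nonempty suffixes. -/
def Lyndon' (w : List α) : Prop :=
  w ≠ [] ∧ ∀ p s : List α, w = p ++ s → p ≠ [] → s ≠ [] → w < s

lemma lyndon'_singleton (a : α) : Lyndon' [a] := by
  refine ⟨by simp, fun p s hps hp hs => ?_⟩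
  have := congrArg List.length hps
  simp at this
  have h1 : 0 < p.length := List.length_pos_iff.mpr hp
  have h2 : 0 < s.length := List.length_pos_iff.mpr hs
  omega

lemma ne_prefix_of_length_lt {u v : List α} (h : v.length < u.length) : ¬ u <+: v :=
  fun hp => absurd hp.length_le (by omega)

lemma lyndon'_iff_lyndonWord (w : List α) : Lyndon' w ↔ LyndonWord (· < ·) w := by
  constructor
  · rintro ⟨hne, h⟩
    refine ⟨hne, fun i hi hilen => ?_⟩
    rw [List.rotate_eq_drop_append_take hilen.le]
    have hsplit : w = w.take i ++ w.drop i := (List.take_append_drop i w).symm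
    have hp : w.take i ≠ [] := by
      intro hh; have := congrArg List.length hh; simp [min_eq_left hilen.le] at this; omega
    have hs : w.drop i ≠ [] := by
      intro hh; have := congrArg List.length hh; simp at this; omega
    have hws : w < w.drop i := h _ _ hsplit hp hs
    rcases prefix_or_append_lt hws with hp' | hap
    · have := hp'.length_le
      simp at this; omega
    · have := hap [] (w.take i)
      simpa using this
  · rintro ⟨hne, h⟩
    refine ⟨hne, fun p s hps hp hs => ?_⟩
    have hlp : 0 < p.length := List.length_pos_iff.mpr hp
    have hls : 0 < s.length := List.length_pos_iff.mpr hs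
    have hlen : w.length = p.length + s.length := by rw [hps]; simp
    have hrot : w < s ++ p := by
      have h0 := h p.length hlp (by omega)
      rw [List.rotate_eq_drop_append_take (by omega), hps, List.drop_left, List.take_left] at h0
      rw [hps]
      exact h0
    by_contra hsw
    push_neg at hsw
    have hslt : s < w := lt_of_le_of_ne hsw (by
      intro hh; rw [← hh] at hlen; omega)
    rcases prefix_or_append_lt hslt with hpre | hap
    · -- s is a proper prefix of w : w = s ++ t
      obtain ⟨t, hst⟩ := hpre
      have ht : t ≠ [] := by
        rintro rfl
        rw [List.append_nil] at hst
        exact (ne_of_lt hslt) hst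
      have hts : t.length = p.length := by
        have := congrArg List.length hst; simp at this; omega
      -- rotation at |s| : w < t ++ s
      have h1 : w < t ++ s := by
        have h0 := h s.length hls (by omega)
        rw [List.rotate_eq_drop_append_take (by omega), ← hst, List.drop_left,
          List.take_left] at h0
        rw [← hst]
        exact h0
      -- w = p ++ s < s ++ p, w = s ++ t so s ++ t < s ++ p, cancel : t < p
      have h2 : t < p := append_lt_cancel (c := s) (by rw [hst]; rw [hps] at hrot ⊢; exact hrot)
      have h3 : ¬ t <+: p := by
        intro hh
        exact absurd (hh.eq_of_length hts) (ne_of_lt h2)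
      rcases prefix_or_append_lt h2 with hc | hap2
      · exact h3 hc
      · have h4 : t ++ s < p ++ s := hap2 s s
        rw [← hps] at h4
        exact absurd h1 (asymm h4)
    · have h4 : s ++ p < w ++ [] := hap p []
      rw [List.append_nil] at h4
      exact absurd hrot (asymm h4)


/-- If u < v and both Lyndon', then u++v < v. -/
lemma append_lt_right {u v : List α} (hv : Lyndon' v) (hu : u ≠ []) (huv : u < v) :
    u ++ v < v := by
  rcases prefix_or_append_lt huv with hpre | hap
  · obtain ⟨t, rfl⟩ := hpre
    have ht : t ≠ [] := by rintro rfl; simp at huv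
    exact List.Lex.append_left _ (hv.2 u t rfl hu ht) u
  · have := hap v []
    simpa using this

/-- Merging: if u, v are Lyndon' and u < v then u ++ v is Lyndon'. -/
lemma Lyndon'.append {u v : List α} (hu : Lyndon' u) (hv : Lyndon' v) (huv : u < v) :
    Lyndon' (u ++ v) := by
  obtain ⟨hune, hu2⟩ := hu
  obtain ⟨hvne, hv2⟩ := hv
  refine ⟨by simp [hune], fun p s hps hp hs => ?_⟩
  have hltuv : u ++ v < v := append_lt_right ⟨hvne, hv2⟩ hune huv
  rcases lt_trichotomy p.length u.length with hlt | heq | hgt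
  · -- p is a proper prefix of u
    have hpu : p <+: u := by
      have h1 : p <+: u ++ v := ⟨s, hps.symm⟩
      have h2 : u <+: u ++ v := ⟨v, rfl⟩
      exact List.prefix_of_prefix_length_le h1 h2 hlt.le
    obtain ⟨u2, hu2eq⟩ := hpu
    have hu2ne : u2 ≠ [] := by
      rintro rfl; rw [List.append_nil] at hu2eq; rw [hu2eq] at hlt; exact lt_irrefl _ hlt
    have hseq : s = u2 ++ v := by
      have : p ++ s = p ++ (u2 ++ v) := by rw [← List.append_assoc, hu2eq, ← hps]
      exact List.append_cancel_left this
    have huu2 : u < u2 := hu2 p u2 hu2eq.symm hp hu2ne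
    have hnp : ¬ u <+: u2 := ne_prefix_of_length_lt (by
      have := congrArg List.length hu2eq; simp at this
      have := List.length_pos_iff.mpr hp; omega)
    rcases prefix_or_append_lt huu2 with hc | hap
    · exact absurd hc hnp
    · rw [hseq]; exact hap v v
  · -- p = u, s = v
    have : p = u ∧ s = v := List.append_inj hps.symm heq
    rw [this.2]
    exact hltuv
  · -- u is a proper prefix of p : p = u ++ p2, v = p2 ++ s
    have hup : u <+: p := by
      have h1 : p <+: u ++ v := ⟨s, hps.symm⟩
      have h2 : u <+: u ++ v := ⟨v, rfl⟩
      exact List.prefix_of_prefix_length_le h2 h1 hgt.le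
    obtain ⟨p2, hp2⟩ := hup
    have hp2ne : p2 ≠ [] := by
      rintro rfl; rw [List.append_nil] at hp2; rw [← hp2] at hgt; exact lt_irrefl _ hgt
    have hveq : v = p2 ++ s := by
      have : u ++ v = u ++ (p2 ++ s) := by rw [← List.append_assoc, hp2, ← hps]
      exact List.append_cancel_left this
    exact lt_trans hltuv (hv2 p2 s hveq hp2ne hs)


/-- Any nonempty prefix of a flatten has a nonempty suffix that is a prefix of a member. -/
lemma exists_suffix_prefix_mem :
    ∀ (L : List (List α)) (r : List α), r ≠ [] → r <+: L.flatten →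
      ∃ v ∈ L, ∃ s, s ≠ [] ∧ s <:+ r ∧ s <+: v := by
  intro L
  induction L with
  | nil => intro r hr hpre; simp at hpre; exact absurd hpre hr
  | cons v T ih =>
    intro r hr hpre
    rw [List.flatten_cons] at hpre
    rcases le_or_gt r.length v.length with hle | hgt
    · refine ⟨v, by simp, r, hr, List.suffix_refl r, ?_⟩
      exact List.prefix_of_prefix_length_le hpre (⟨T.flatten, rfl⟩) hle
    · have hvp : v <+: r := List.prefix_of_prefix_length_le ⟨T.flatten, rfl⟩ hpre hgt.le
      obtain ⟨r2, rfl⟩ := hvp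
      have hr2 : r2 ≠ [] := by
        rintro rfl; rw [List.append_nil] at hgt; exact lt_irrefl _ hgt
      have hr2pre : r2 <+: T.flatten := by
        obtain ⟨t, ht⟩ := hpre
        exact ⟨t, List.append_cancel_left (by rw [← List.append_assoc, ht])⟩
      obtain ⟨v', hv', s, hs, hsr, hsv⟩ := ih r2 hr2 hr2pre
      exact ⟨v', by simp [hv'], s, hs, hsr.trans (List.suffix_append v r2), hsv⟩

/-- All later entries of a chain of ¬· < · are ≤ the head. -/
lemma chain_le_head {u : List α} {L : List (List α)}
    (h : List.Chain' (fun a b : List α => ¬ a < b) (u :: L)) : ∀ v ∈ L, v ≤ u := by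
  have htr : IsTrans (List α) (fun a b : List α => ¬ a < b) :=
    ⟨fun a b c hab hbc => by
      rw [not_lt] at *; exact le_trans hbc hab⟩
  rw [List.Chain', List.isChain_iff_pairwise] at h
  intro v hv
  exact not_lt.mp ((List.pairwise_cons.mp h).1 v hv)

/-- A Lyndon' prefix of the flatten of a valid factorization is no longer than the head. -/
lemma lyndon_prefix_length_le {u p : List α} {L : List (List α)}
    (hu : Lyndon' u) (hle : ∀ v ∈ L, v ≤ u)
    (hp : Lyndon' p) (hpre : p <+: u ++ L.flatten) : p.length ≤ u.length := by
  by_contra hc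
  push_neg at hc
  have hup : u <+: p :=
    List.prefix_of_prefix_length_le ⟨L.flatten, rfl⟩ hpre hc.le
  obtain ⟨r, rfl⟩ := hup
  have hr : r ≠ [] := by rintro rfl; simp at hc
  have hrpre : r <+: L.flatten := by
    obtain ⟨t, ht⟩ := hpre
    exact ⟨t, List.append_cancel_left (by rw [← List.append_assoc, ht])⟩
  obtain ⟨v, hv, s, hs, hsr, hsv⟩ := exists_suffix_prefix_mem L r hr hrpre
  obtain ⟨q, rfl⟩ := hsr
  -- p = u ++ (q ++ s), s a proper nonempty suffix
  have hps : u ++ (q ++ s) < s := by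
    refine hp.2 (u ++ q) s (by rw [List.append_assoc]) (by simp [hu.1]) hs
  have h1 : s ≤ v := le_of_prefix hsv
  have h2 : v ≤ u := hle v hv
  have h3 : u < u ++ (q ++ s) := lt_append_right u (by simp [hs])
  exact absurd (lt_of_lt_of_le hps (le_trans h1 h2)) (asymm h3)

/-- Every nonempty word has a longest Lyndon' prefix. -/
lemma exists_longest_lyndon_prefix (w : List α) (hw : w ≠ []) :
    ∃ p, p <+: w ∧ Lyndon' p ∧ ∀ q, q <+: w → Lyndon' q → q.length ≤ p.length := by
  classical
  set P : ℕ → Prop := fun k => Lyndon' (w.take k) with hP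
  have hP1 : P 1 := by
    obtain ⟨a, t, rfl⟩ := List.exists_cons_of_ne_nil hw
    simpa [hP] using lyndon'_singleton a
  have h1n : 1 ≤ w.length := by
    have := List.length_pos_iff.mpr hw; omega
  set k := Nat.findGreatest P w.length with hk
  have hPk : P k := Nat.findGreatest_spec h1n hP1
  refine ⟨w.take k, List.take_prefix k w, hPk, fun q hq hlq => ?_⟩
  have hqeq : q = w.take q.length := List.prefix_iff_eq_take.mp hq
  have hqlen : q.length ≤ w.length := hq.length_le
  by_contra hc
  push_neg at hc
  have hklen : k ≤ w.length := Nat.findGreatest_le w.length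
  have : ¬ P q.length := Nat.findGreatest_is_greatest (by
      rw [← hk]
      have := List.length_take (i := k) (l := w)
      -- q.length > (w.take k).length; since k ≤ w.length, (w.take k).length = k
      omega) hqlen
  rw [hP] at this
  refine this ?_
  show Lyndon' (List.take q.length w)
  rw [← hqeq]
  exact hlq

/-- Existence of the Lyndon factorization (in terms of Lyndon'). -/
lemma exists_factorization (w : List α) :
    ∃ L : List (List α), (∀ u ∈ L, Lyndon' u) ∧
      List.Chain' (fun a b : List α => ¬ a < b) L ∧ L.flatten = w := by
  generalize hn : w.length = n
  induction n using Nat.strong_induction_on generalizing w with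
  | _ n ih =>
    rcases eq_or_ne w [] with rfl | hw
    · exact ⟨[], by simp, List.isChain_nil, by simp⟩
    · obtain ⟨p, hpre, hp, hmax⟩ := exists_longest_lyndon_prefix w hw
      obtain ⟨v, rfl⟩ := hpre
      have hplen : 0 < p.length := List.length_pos_iff.mpr hp.1
      have hvlen : v.length < n := by
        rw [← hn, List.length_append]; omega
      obtain ⟨L, hL1, hL2, hL3⟩ := ih v.length hvlen v rfl
      refine ⟨p :: L, ?_, ?_, by simp [hL3]⟩
      · intro u hu
        rcases List.mem_cons.mp hu with rfl | hu
        · exact hp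
        · exact hL1 u hu
      · rw [List.Chain', List.isChain_cons]
        refine ⟨fun y hy => ?_, hL2⟩
        have hyL : y ∈ L := by
          cases L with
          | nil => simp at hy
          | cons a T => simp at hy; simp [hy]
        intro hpy
        have hy' : Lyndon' y := hL1 y hyL
        have hypre : y <+: v := by
          cases L with
          | nil => simp at hy
          | cons a T =>
            simp at hy
            subst hy
            rw [← hL3, List.flatten_cons]
            exact ⟨T.flatten, rfl⟩
        have hmerge : Lyndon' (p ++ y) := hp.append hy' hpy
        have hmlen := hmax (p ++ y) (by
          obtain ⟨t, ht⟩ := hypre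
          exact ⟨t, by rw [List.append_assoc, ht]⟩) hmerge
        rw [List.length_append] at hmlen
        have := List.length_pos_iff.mpr hy'.1
        omega

/-- Uniqueness of the Lyndon factorization. -/
lemma factorization_unique :
    ∀ (L₁ L₂ : List (List α)), (∀ u ∈ L₁, Lyndon' u) → (∀ u ∈ L₂, Lyndon' u) →
      List.Chain' (fun a b : List α => ¬ a < b) L₁ →
      List.Chain' (fun a b : List α => ¬ a < b) L₂ →
      L₁.flatten = L₂.flatten → L₁ = L₂ := by
  intro L₁
  induction L₁ with
  | nil =>
    intro L₂ _ h2 _ _ hf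
    cases L₂ with
    | nil => rfl
    | cons v T =>
      exfalso
      have hv : v ≠ [] := (h2 v (by simp)).1
      rw [List.flatten_nil, List.flatten_cons] at hf
      exact hv (List.append_eq_nil_iff.mp hf.symm).1
  | cons u T ih =>
    intro L₂ h1 h2 hc1 hc2 hf
    cases L₂ with
    | nil =>
      exfalso
      have hu : u ≠ [] := (h1 u (by simp)).1
      rw [List.flatten_nil, List.flatten_cons] at hf
      exact hu (List.append_eq_nil_iff.mp hf).1
    | cons v S =>
      have hu : Lyndon' u := h1 u (by simp)
      have hv : Lyndon' v := h2 v (by simp)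
      rw [List.flatten_cons, List.flatten_cons] at hf
      have hle1 : u.length ≤ v.length := by
        refine lyndon_prefix_length_le hv (chain_le_head hc2) hu ?_
        rw [← hf]; exact ⟨T.flatten, rfl⟩
      have hle2 : v.length ≤ u.length := by
        refine lyndon_prefix_length_le hu (chain_le_head hc1) hv ?_
        rw [hf]; exact ⟨S.flatten, rfl⟩
      have huv : u = v := by
        have hpre : u <+: v ++ S.flatten := by rw [← hf]; exact ⟨T.flatten, rfl⟩
        have : u <+: v := List.prefix_of_prefix_length_le hpre ⟨S.flatten, rfl⟩ hle1
        exact this.eq_of_length (le_antisymm hle1 hle2)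
      subst huv
      have hTS : T.flatten = S.flatten := List.append_cancel_left hf
      have := ih S (fun x hx => h1 x (by simp [hx])) (fun x hx => h2 x (by simp [hx]))
        ((List.isChain_cons.mp hc1).2) ((List.isChain_cons.mp hc2).2) hTS
      rw [this]

end LyndonAux

/-- every word over a totally ordered alphabet has a unique factorization as a
concatenation of Lyndon words which is weakly decreasing in lexicographic order. -/
theorem unique_lyndon_factorization {α : Type*} [LinearOrder α] (w : List α) :
    ∃! L : List (List α),
      (∀ u ∈ L, LyndonWord (· < ·) u) ∧
      L.Chain' (fun u v => ¬ List.Lex (· < ·) u v) ∧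
      L.flatten = w := by
  obtain ⟨L, h1, h2, h3⟩ := LyndonAux.exists_factorization w
  refine ⟨L, ⟨fun u hu => (LyndonAux.lyndon'_iff_lyndonWord u).mp (h1 u hu), h2, h3⟩, ?_⟩
  rintro M ⟨m1, m2, m3⟩
  exact LyndonAux.factorization_unique M L
    (fun u hu => (LyndonAux.lyndon'_iff_lyndonWord u).mpr (m1 u hu)) h1 m2 h2 (by rw [m3, h3])

end
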